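/- Let X be an infinite set and c a word as above. For each m ≥ 1 and each finite K ⊆ X, the set V_{m,K} = {α ∈ (Sym(X))^n : every ⟨c(α)⟩-orbit of size m is contained in K} is closed in (Sym(X))^n. -/

import Mathlib

/-- The topology of pointwise convergence on `Sym(X)`. -/
def permPtwise (X : Type*) : TopologicalSpace (Equiv.Perm X) :=
  TopologicalSpace.induced (fun σ : Equiv.Perm X => (σ : X → X))
    (@Pi.topologicalSpace X (fun _ => X) (fun _ => ⊥))

/-- Evaluation of a word `c` in the variables `α_1,…,α_n` and a fixed permutation `β`. -/
def wordEval {X : Type*} {n : ℕ} (β : Equiv.Perm X) (c : FreeGroup (Option (Fin n)))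
    (α : Fin n → Equiv.Perm X) : Equiv.Perm X :=
  FreeGroup.lift (fun o => Option.elim o β α) c

/-- The orbit of `x` under the cyclic group generated by the permutation `c(α)`. -/
def wordOrbit {X : Type*} {n : ℕ} (β : Equiv.Perm X) (c : FreeGroup (Option (Fin n)))
    (α : Fin n → Equiv.Perm X) (x : X) : Set X :=
  {y | ∃ j : ℤ, ((wordEval β c α) ^ j) x = y}

section Aux

variable {X : Type*} {n : ℕ}

/-- Word evaluation at a point is continuous (into discrete `X`). -/
private lemma cont_word (β : Equiv.Perm X) (c : FreeGroup (Option (Fin n))) (y : X) :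
    @Continuous (Fin n → Equiv.Perm X) X
      (@Pi.topologicalSpace (Fin n) (fun _ => Equiv.Perm X) (fun _ => permPtwise X)) ⊥
      (fun α => (wordEval β c α) y) := by
  letI : TopologicalSpace X := ⊥
  haveI : DiscreteTopology X := ⟨rfl⟩
  letI : TopologicalSpace (Equiv.Perm X) := permPtwise X
  have coe_cont : Continuous (fun σ : Equiv.Perm X => (σ : X → X)) :=
    @continuous_induced_dom (Equiv.Perm X) (X → X) (fun σ : Equiv.Perm X => (σ : X → X)) _
  have gen_cont : ∀ (o : Option (Fin n)) (z : X),
      Continuous (fun α : Fin n → Equiv.Perm X => (Option.elim o β α) z) := by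
    intro o z
    cases o with
    | none => exact @continuous_const (Fin n → Equiv.Perm X) X _ _ (β z)
    | some i =>
      exact (continuous_apply z).comp (coe_cont.comp (continuous_apply i))
  revert y
  induction c using FreeGroup.induction_on with
  | C1 =>
    intro y
    simp only [wordEval, map_one, Equiv.Perm.one_apply]
    exact continuous_const
  | of o =>
    intro y
    simpa only [wordEval, FreeGroup.lift_apply_of] using gen_cont o y
  | inv_of o _ =>
    intro y
    have hfun : (fun α : Fin n → Equiv.Perm X => (wordEval β (FreeGroup.of o)⁻¹ α) y)
        = fun α : Fin n → Equiv.Perm X => (Option.elim o β α)⁻¹ y := by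
      funext α
      rw [wordEval, map_inv,
        show (FreeGroup.lift fun o => Option.elim o β α) (FreeGroup.of o) = Option.elim o β α
          from FreeGroup.lift_apply_of]
    rw [hfun, continuous_discrete_rng]
    intro z
    have : (fun α : Fin n → Equiv.Perm X => (Option.elim o β α)⁻¹ y) ⁻¹' {z}
        = (fun α : Fin n → Equiv.Perm X => (Option.elim o β α) z) ⁻¹' {y} := by
      ext α
      simp only [Set.mem_preimage, Set.mem_singleton_iff]
      constructor
      · rintro rfl; simp
      · rintro rfl; simp
    rw [this]
    exact (gen_cont o z).isOpen_preimage _ (isOpen_discrete _)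
  | mul a b iha ihb =>
    intro y
    simp only [wordEval, map_mul, Equiv.Perm.mul_apply] at *
    rw [continuous_discrete_rng]
    intro z
    have : (fun α : Fin n → Equiv.Perm X =>
          (FreeGroup.lift (fun o => Option.elim o β α) a)
            ((FreeGroup.lift (fun o => Option.elim o β α) b) y)) ⁻¹' {z}
        = ⋃ w : X, ((fun α : Fin n → Equiv.Perm X =>
              (FreeGroup.lift (fun o => Option.elim o β α) b) y) ⁻¹' {w}) ∩
            ((fun α : Fin n → Equiv.Perm X =>
              (FreeGroup.lift (fun o => Option.elim o β α) a) w) ⁻¹' {z}) := by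
      ext α
      simp only [Set.mem_preimage, Set.mem_singleton_iff, Set.mem_iUnion, Set.mem_inter_iff]
      constructor
      · intro h; exact ⟨_, rfl, h⟩
      · rintro ⟨w, rfl, h⟩; exact h
    rw [this]
    exact isOpen_iUnion fun w =>
      ((ihb y).isOpen_preimage _ (isOpen_discrete _)).inter
        ((iha w).isOpen_preimage _ (isOpen_discrete _))

/-- If `σ^d` fixes `x` then the `⟨σ⟩`-orbit of `x` is the image of `{0,…,d-1}`. -/
private lemma orbit_eq_image (σ : Equiv.Perm X) (x : X) (d : ℕ) (hd : 1 ≤ d)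
    (h : (σ ^ d) x = x) :
    {y | ∃ j : ℤ, (σ ^ j) x = y} = (fun k : ℕ => (σ ^ k) x) '' Set.Iio d := by
  have hdz : (0 : ℤ) < (d : ℤ) := by exact_mod_cast hd
  have hfix : (σ ^ (d : ℤ)) x = x := by rw [zpow_natCast]; exact h
  ext y
  constructor
  · rintro ⟨j, rfl⟩
    have h0 : 0 ≤ j % d := Int.emod_nonneg j (by omega)
    have h1 : j % d < d := Int.emod_lt_of_pos j hdz
    refine ⟨(j % d).toNat, by simp [Set.mem_Iio]; omega, ?_⟩
    have hsplit : σ ^ j = σ ^ (j % d) * (σ ^ (d : ℤ)) ^ (j / d) := by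
      rw [← zpow_mul, ← zpow_add]
      congr 1
      exact (Int.emod_add_mul_ediv j d).symm
    have hfix2 : ((σ ^ (d : ℤ)) ^ (j / d)) x = x :=
      Equiv.Perm.zpow_apply_eq_self_of_apply_eq_self hfix _
    show (σ ^ (j % (d : ℤ)).toNat) x = (σ ^ j) x
    rw [hsplit, Equiv.Perm.mul_apply, hfix2, ← zpow_natCast σ ((j % (d : ℤ)).toNat),
      Int.toNat_of_nonneg h0]
  · rintro ⟨k, _, rfl⟩
    exact ⟨(k : ℤ), by rw [zpow_natCast]⟩

end Aux

/-- For each `m ≥ 1` and finite `K ⊆ X`, the set `V_{m,K}` of `α` such that every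
`⟨c(α)⟩`-orbit of size `m` is contained in `K` is closed in `(Sym(X))^n`. -/
theorem VmK_isClosed (X : Type*) [Infinite X] (n m : ℕ) (hm : 1 ≤ m)
    (c : FreeGroup (Option (Fin n))) (β : Equiv.Perm X) (K : Finset X) :
    @IsClosed (Fin n → Equiv.Perm X)
      (@Pi.topologicalSpace (Fin n) (fun _ => Equiv.Perm X) (fun _ => permPtwise X))
      {α : Fin n → Equiv.Perm X |
        ∀ x : X, (wordOrbit β c α x).ncard = m → wordOrbit β c α x ⊆ ↑K} := by
  letI : TopologicalSpace X := ⊥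
  haveI : DiscreteTopology X := ⟨rfl⟩
  letI : TopologicalSpace (Equiv.Perm X) := permPtwise X
  rw [← isOpen_compl_iff, isOpen_iff_forall_mem_open]
  intro α hα
  simp only [Set.mem_compl_iff, Set.mem_setOf_eq, not_forall] at hα
  obtain ⟨x, hcard, hK⟩ := hα
  set σ := wordEval β c α with hσ
  -- the orbit is finite
  have hfin : (wordOrbit β c α x).Finite := by
    by_contra h
    rw [Set.Infinite.ncard h] at hcard
    omega
  -- σ^m fixes x
  have hfixm : (σ ^ m) x = x := by
    -- pigeonhole: find 0 ≤ i < j ≤ m with σ^i x = σ^j x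
    have hcard' : hfin.toFinset.card = m := by
      rw [← Set.ncard_eq_toFinset_card _ hfin, hcard]
    have hmaps : ∀ k ∈ Finset.range (m + 1), (σ ^ k) x ∈ hfin.toFinset := by
      intro k _
      rw [Set.Finite.mem_toFinset]
      exact ⟨(k : ℤ), by rw [zpow_natCast]⟩
    obtain ⟨i, hi, j, hj, hij, hval⟩ :=
      Finset.exists_ne_map_eq_of_card_lt_of_maps_to
        (by rw [hcard', Finset.card_range]; omega) hmaps
    simp only [Finset.mem_range] at hi hj
    have key : ∀ i j : ℕ, i < j → j < m + 1 → (σ ^ i) x = (σ ^ j) x → (σ ^ m) x = x := by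
      intro i j hlt hj hval
      set d := j - i with hd
      have hd1 : 1 ≤ d := by omega
      have hdm : d ≤ m := by omega
      have hfixd : (σ ^ d) x = x := by
        have hstep : (σ ^ i) ((σ ^ d) x) = (σ ^ i) x := by
          rw [← Equiv.Perm.mul_apply, ← pow_add, show i + d = j by omega, ← hval]
        exact (σ ^ i).injective hstep
      -- orbit = image of Iio d, so m = ncard ≤ d ≤ m, hence d = m
      have horb : wordOrbit β c α x = (fun k : ℕ => (σ ^ k) x) '' Set.Iio d :=
        orbit_eq_image σ x d hd1 hfixd
      have hle : m ≤ d := by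
        calc m = (wordOrbit β c α x).ncard := hcard.symm
          _ ≤ (Set.Iio d).ncard := by
              rw [horb]
              exact Set.ncard_image_le (by
                rw [← Finset.coe_range]
                exact (Finset.range d).finite_toSet)
          _ = d := by rw [← Finset.coe_range, Set.ncard_coe_finset, Finset.card_range]
      have hdeq : d = m := le_antisymm hdm hle
      rw [← hdeq]
      exact hfixd
    rcases hij.lt_or_gt with h | h
    · exact key i j h hj hval
    · exact key j i h hi hval.symm
  -- the open neighbourhood
  refine ⟨{α' : Fin n → Equiv.Perm X |
      ∀ k ≤ m, (wordEval β c α' ^ k) x = (σ ^ k) x}, ?_, ?_, ?_⟩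
  · -- contained in the complement
    intro α' hα'
    simp only [Set.mem_setOf_eq] at hα'
    simp only [Set.mem_compl_iff, Set.mem_setOf_eq, not_forall]
    have hfix' : (wordEval β c α' ^ m) x = x := by rw [hα' m le_rfl]; exact hfixm
    have h1 : wordOrbit β c α' x = (fun k : ℕ => (wordEval β c α' ^ k) x) '' Set.Iio m :=
      orbit_eq_image _ x m hm hfix'
    have h2 : wordOrbit β c α x = (fun k : ℕ => (σ ^ k) x) '' Set.Iio m :=
      orbit_eq_image σ x m hm hfixm
    have himg : (fun k : ℕ => (wordEval β c α' ^ k) x) '' Set.Iio m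
        = (fun k : ℕ => (σ ^ k) x) '' Set.Iio m :=
      Set.image_congr fun k hk => hα' k (le_of_lt hk)
    have horb : wordOrbit β c α' x = wordOrbit β c α x := by rw [h1, himg, ← h2]
    exact ⟨x, by rw [horb]; exact hcard, by rw [horb]; exact hK⟩
  · -- open
    have heq : {α' : Fin n → Equiv.Perm X | ∀ k ≤ m, (wordEval β c α' ^ k) x = (σ ^ k) x}
        = ⋂ k ∈ Finset.range (m + 1),
            {α' : Fin n → Equiv.Perm X | (wordEval β (c ^ k) α') x = (σ ^ k) x} := by
      ext α'
      simp only [Set.mem_setOf_eq, Set.mem_iInter, Finset.mem_range, wordEval, map_pow]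
      constructor
      · intro h k hk; exact h k (by omega)
      · intro h k hk; exact h k (by omega)
    rw [heq]
    refine isOpen_biInter_finset fun k _ => ?_
    exact (cont_word β (c ^ k) x).isOpen_preimage {(σ ^ k) x} (isOpen_discrete _)
  · -- contains α
    intro k _
    rfl
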